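/- Let n ≥ 5 and let F be a 5-antichain saturated family of subsets of [n]. Then there is no i with 1 ≤ i ≤ n − 1 such that F contains exactly two sets of size i. -/

import Mathlib

open Finset

/-- A family `F` of finite subsets of ℕ contains a `k`-antichain: there are `k` sets in `F`
that are pairwise incomparable under inclusion. -/
def ContainsAntichain (k : ℕ) (F : Finset (Finset ℕ)) : Prop :=
  ∃ S ⊆ F, S.card = k ∧ ∀ A ∈ S, ∀ B ∈ S, A ≠ B → ¬ A ⊆ B

/-- `F` is a `k`-antichain saturated family of subsets of `[n] = {1, …, n}`:
all members are subsets of `[n]`, `F` contains no `k`-antichain, but adding any new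
subset of `[n]` creates a `k`-antichain. -/
def IsAntichainSaturated (n k : ℕ) (F : Finset (Finset ℕ)) : Prop :=
  (∀ A ∈ F, A ⊆ Finset.Icc 1 n) ∧
  ¬ ContainsAntichain k F ∧
  ∀ X ⊆ Finset.Icc 1 n, X ∉ F → ContainsAntichain k (insert X F)

private lemma binom_lb (m r : ℕ) (h1 : 1 ≤ r) (h2 : r < m) : m ≤ m.choose r := by
  induction m generalizing r with
  | zero => omega
  | succ m ih =>
    rcases Nat.lt_or_ge r m with hlt | hge
    · obtain ⟨k, rfl⟩ : ∃ k, r = k + 1 := ⟨r - 1, by omega⟩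
      rw [Nat.choose_succ_succ]
      have h3 := ih (k+1) h1 hlt
      have h4 : 0 < m.choose k := Nat.choose_pos (by omega)
      simp only [Nat.succ_eq_add_one]
      omega
    · have : r = m := by omega
      subst this
      rw [Nat.choose_succ_self_right]

private lemma cover_card (l : List (Finset (Finset ℕ))) :
    ∀ (S : Finset (Finset ℕ)), (∀ x ∈ S, ∃ c ∈ l, x ∈ c) →
    S.card ≤ (l.map (fun c => (S ∩ c).card)).sum := by
  induction l with
  | nil =>
    intro S hcov
    have : S = ∅ := by
      by_contra h
      obtain ⟨x, hx⟩ := Finset.nonempty_iff_ne_empty.mpr h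
      obtain ⟨c, hc, _⟩ := hcov x hx
      simp at hc
    simp [this]
  | cons c t ih =>
    intro S hcov
    have ih2 := ih (S \ c) (by
      intro x hx
      obtain ⟨d, hd, hxd⟩ := hcov x (Finset.mem_sdiff.mp hx).1
      rcases List.mem_cons.mp hd with rfl | hdt
      · exact absurd hxd (Finset.mem_sdiff.mp hx).2
      · exact ⟨d, hdt, hxd⟩)
    have hmono : ((t.map (fun d => ((S \ c) ∩ d).card)).sum) ≤ ((t.map (fun d => (S ∩ d).card)).sum) := by
      apply List.sum_le_sum
      intro d hd
      exact Finset.card_le_card (by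
        intro x hx
        simp only [Finset.mem_inter, Finset.mem_sdiff] at hx ⊢
        exact ⟨hx.1.1, hx.2⟩)
    have hsplit : (S ∩ c).card + (S \ c).card = S.card := Finset.card_inter_add_card_sdiff S c
    simp only [List.map_cons, List.sum_cons]
    omega

/-- every chain in a disjointly-covering list of chains meets a pairwise-incomparable
family of size equal to the list length -/
private lemma meets_all (l : List (Finset (Finset ℕ)))
    (hch : ∀ c ∈ l, ∀ x ∈ c, ∀ y ∈ c, x ⊆ y ∨ y ⊆ x)
    (S : Finset (Finset ℕ))
    (hAC : ∀ x ∈ S, ∀ y ∈ S, x ≠ y → ¬ x ⊆ y)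
    (hcov : ∀ x ∈ S, ∃ c ∈ l, x ∈ c)
    (hcard : l.length ≤ S.card) :
    ∀ c ∈ l, ∃ x ∈ S, x ∈ c := by
  have hle1 : ∀ c ∈ l, (S ∩ c).card ≤ 1 := by
    intro c hc
    by_contra h
    have h2 : 1 < (S ∩ c).card := by omega
    obtain ⟨x, hx, y, hy, hxy⟩ := Finset.one_lt_card.mp h2
    have hxS := Finset.mem_inter.mp hx
    have hyS := Finset.mem_inter.mp hy
    rcases hch c hc x hxS.2 y hyS.2 with hsub | hsub
    · exact hAC x hxS.1 y hyS.1 hxy hsub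
    · exact hAC y hyS.1 x hxS.1 (Ne.symm hxy) hsub
  intro c hc
  by_contra h
  push_neg at h
  have h0 : (S ∩ c).card = 0 := by
    rw [Finset.card_eq_zero, Finset.eq_empty_iff_forall_notMem]
    intro x hx
    have := Finset.mem_inter.mp hx
    exact h x this.1 this.2
  obtain ⟨l1, l2, rfl⟩ := List.append_of_mem hc
  have hsum := cover_card (l1 ++ c :: l2) S hcov
  have hsum1 : ((l1.map (fun d => (S ∩ d).card)).sum) ≤ l1.length := by
    calc ((l1.map (fun d => (S ∩ d).card)).sum) ≤ ((l1.map (fun _ => 1)).sum) := by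
          apply List.sum_le_sum
          intro d hd
          exact hle1 d (by simp [hd])
      _ = l1.length := by simp
  have hsum2 : ((l2.map (fun d => (S ∩ d).card)).sum) ≤ l2.length := by
    calc ((l2.map (fun d => (S ∩ d).card)).sum) ≤ ((l2.map (fun _ => 1)).sum) := by
          apply List.sum_le_sum
          intro d hd
          exact hle1 d (by simp [hd])
      _ = l2.length := by simp
  simp only [List.map_append, List.sum_append, List.map_cons, List.sum_cons, List.length_append,
    List.length_cons, h0] at hsum hcard
  omega


private lemma pairwise_value {α : Type*} (R : α → α → Prop) (hsymm : ∀ a b, R a b → R b a) :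
    ∀ (l : List α), l.Pairwise R → (∀ a ∈ l, ¬ R a a) →
    ∀ a ∈ l, ∀ b ∈ l, a ≠ b → R a b := by
  intro l
  induction l with
  | nil => intro _ _ a ha; simp at ha
  | cons c t ih =>
    intro hp hirr a ha b hb hab
    rw [List.pairwise_cons] at hp
    rcases List.mem_cons.mp ha with rfl | hat
    · rcases List.mem_cons.mp hb with rfl | hbt
      · exact absurd rfl hab
      · exact hp.1 b hbt
    · rcases List.mem_cons.mp hb with rfl | hbt
      · exact hsymm _ _ (hp.1 a hat)
      · exact ih hp.2 (fun x hx => hirr x (List.mem_cons_of_mem _ hx)) a hat b hbt hab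

private lemma empty_case (k : ℕ) :
    ∃ l : List (Finset (Finset ℕ)), l.length = k ∧
      (∀ c ∈ l, (∀ x ∈ c, ∀ y ∈ c, x ⊆ y ∨ y ⊆ x) ∧ c ⊆ (∅ : Finset (Finset ℕ))) ∧
      (∀ x ∈ (∅ : Finset (Finset ℕ)), ∃ c ∈ l, x ∈ c) ∧
      l.Pairwise (fun c d => ∀ x ∈ c, x ∉ d) := by
  refine ⟨List.replicate k ∅, by simp, ?_, by simp, ?_⟩
  · intro c hc
    rw [List.eq_of_mem_replicate hc]
    simp
  · induction k with
    | zero => simp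
    | succ k ih =>
      rw [List.replicate_succ, List.pairwise_cons]
      exact ⟨fun c hc x hx => by simp at hx, ih⟩

private lemma dilworth (N : ℕ) : ∀ (F : Finset (Finset ℕ)) (k : ℕ), F.card ≤ N →
    ¬ ContainsAntichain (k+1) F →
    ∃ l : List (Finset (Finset ℕ)), l.length = k ∧
      (∀ c ∈ l, (∀ x ∈ c, ∀ y ∈ c, x ⊆ y ∨ y ⊆ x) ∧ c ⊆ F) ∧
      (∀ x ∈ F, ∃ c ∈ l, x ∈ c) ∧
      l.Pairwise (fun c d => ∀ x ∈ c, x ∉ d) := by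
  induction N with
  | zero =>
    intro F k hcard _
    have : F = ∅ := Finset.card_eq_zero.mp (Nat.le_antisymm hcard (Nat.zero_le _))
    subst this
    exact empty_case k
  | succ N ih =>
    intro F k hcard hno
    classical
    by_cases hFe : F = ∅
    · subst hFe; exact empty_case k
    · obtain ⟨a, haF, hamax⟩ := Finset.exists_max_image F (fun x => x.card)
        (Finset.nonempty_iff_ne_empty.mpr hFe)
      have hamax' : ∀ x ∈ F, a ⊆ x → x = a :=
        fun x hx hax => (Finset.eq_of_subset_of_card_le hax (hamax x hx)).symm
      set F' := F.erase a with hF'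
      have hF'sub : F' ⊆ F := Finset.erase_subset a F
      have haF' : a ∉ F' := Finset.notMem_erase a F
      have hF'card : F'.card ≤ N := by
        have h1 : 0 < F.card := Finset.card_pos.mpr (Finset.nonempty_iff_ne_empty.mpr hFe)
        have h2 : F'.card = F.card - 1 := Finset.card_erase_of_mem haF
        omega
      match k with
      | 0 =>
        exfalso
        apply hno
        refine ⟨{a}, by simpa using haF, by simp, ?_⟩
        intro x hx y hy hxy
        simp only [Finset.mem_singleton] at hx hy
        exact absurd (hx.trans hy.symm) hxy
      | k + 1 =>
        by_cases hex : ∃ S, S ⊆ F' ∧ S.card = k+1 ∧ ∀ x ∈ S, ∀ y ∈ S, x ≠ y → ¬ x ⊆ y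
        · -- Galvin's main case
          have hno' : ¬ ContainsAntichain (k+1+1) F' := by
            rintro ⟨S, hS, hc, hA⟩
            exact hno ⟨S, hS.trans hF'sub, hc, hA⟩
          obtain ⟨l, hlen, hprops, hcov, hdisj⟩ := ih F' (k+1) hF'card hno'
          obtain ⟨S₀, hS₀sub, hS₀card, hS₀AC⟩ := hex
          set Good : Finset ℕ → Prop :=
            fun x => ∃ S, S ⊆ F' ∧ S.card = k+1 ∧ (∀ u ∈ S, ∀ v ∈ S, u ≠ v → ¬ u ⊆ v) ∧ x ∈ S
            with hGood
          -- every chain meets S₀, hence has a Good element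
          have hmeet : ∀ (S : Finset (Finset ℕ)), S ⊆ F' → S.card = k+1 →
              (∀ u ∈ S, ∀ v ∈ S, u ≠ v → ¬ u ⊆ v) → ∀ c ∈ l, ∃ x ∈ S, x ∈ c := by
            intro S hSsub hScard hSAC
            exact meets_all l (fun c hc => (hprops c hc).1) S hSAC
              (fun x hx => hcov x (hSsub hx)) (by omega)
          have hne : ∀ c ∈ l, (c.filter Good).Nonempty := by
            intro c hc
            obtain ⟨x, hxS, hxc⟩ := hmeet S₀ hS₀sub hS₀card hS₀AC c hc
            exact ⟨x, Finset.mem_filter.mpr ⟨hxc, ⟨S₀, hS₀sub, hS₀card, hS₀AC, hxS⟩⟩⟩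
          have hf : ∀ c : Finset (Finset ℕ), ∃ m : Finset ℕ, c ∈ l →
              (m ∈ c.filter Good ∧ ∀ y ∈ c.filter Good, y.card ≤ m.card) := by
            intro c
            by_cases hc : c ∈ l
            · obtain ⟨m, hm1, hm2⟩ := Finset.exists_max_image (c.filter Good)
                (fun x => x.card) (hne c hc)
              exact ⟨m, fun _ => ⟨hm1, hm2⟩⟩
            · exact ⟨∅, fun h => absurd h hc⟩
          choose f hfspec using hf
          have hfmem : ∀ c ∈ l, f c ∈ c := fun c hc => (Finset.mem_filter.mp ((hfspec c hc).1)).1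
          have hfGood : ∀ c ∈ l, Good (f c) := fun c hc => (Finset.mem_filter.mp ((hfspec c hc).1)).2
          have hfmax : ∀ c ∈ l, ∀ y ∈ c.filter Good, y ⊆ f c := by
            intro c hc y hy
            have hcard2 := (hfspec c hc).2 y hy
            have hych : y ∈ c := (Finset.mem_filter.mp hy).1
            rcases (hprops c hc).1 y hych (f c) (hfmem c hc) with h | h
            · exact h
            · rw [Finset.eq_of_subset_of_card_le h hcard2]
          -- value-level disjointness
          have hirr : ∀ c ∈ l, ¬ (∀ x ∈ c, x ∉ c) := by
            intro c hc hcon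
            obtain ⟨x, hx⟩ := hne c hc
            exact hcon x (Finset.mem_filter.mp hx).1 (Finset.mem_filter.mp hx).1
          have hdisj2 : ∀ c ∈ l, ∀ d ∈ l, c ≠ d → ∀ x ∈ c, x ∉ d :=
            pairwise_value _ (fun c d h x hxd hxc => h x hxc hxd) l hdisj hirr
          -- the list of maxima has no duplicates
          have hlnd : l.Nodup := by
            apply List.Pairwise.imp_of_mem ?_ hdisj
            intro c d hc hd hR heq
            subst heq
            exact hirr c hc hR
          have hmapnd : (l.map f).Nodup := by
            apply hlnd.map_on
            intro x hx y hy hfxy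
            by_contra hxy
            exact hdisj2 x hx y hy hxy (f x) (hfmem x hx) (hfxy ▸ hfmem y hy)
          set Astar : Finset (Finset ℕ) := (l.map f).toFinset with hAstar
          have hAstar_mem : ∀ z, z ∈ Astar ↔ ∃ c ∈ l, f c = z := by
            intro z; simp [hAstar]
          have hAstar_card : Astar.card = k + 1 := by
            rw [hAstar, List.toFinset_card_of_nodup hmapnd, List.length_map, hlen]
          have hAstar_sub : Astar ⊆ F' := by
            intro z hz
            obtain ⟨c, hc, rfl⟩ := (hAstar_mem z).mp hz
            exact (hprops c hc).2 (hfmem c hc)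
          -- Astar is an antichain
          have hAstar_AC : ∀ x ∈ Astar, ∀ y ∈ Astar, x ≠ y → ¬ x ⊆ y := by
            intro x hx y hy hxy hsub
            obtain ⟨c, hc, rfl⟩ := (hAstar_mem x).mp hx
            obtain ⟨d, hd, rfl⟩ := (hAstar_mem y).mp hy
            have hcd : c ≠ d := by rintro rfl; exact hxy rfl
            obtain ⟨S, hSsub, hScard, hSAC, hfdS⟩ := hfGood d hd
            obtain ⟨w, hwS, hwc⟩ := hmeet S hSsub hScard hSAC c hc
            have hwfc : w ⊆ f c := hfmax c hc w
              (Finset.mem_filter.mpr ⟨hwc, ⟨S, hSsub, hScard, hSAC, hwS⟩⟩)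
            have hwfd : w ≠ f d := by
              intro h
              exact hdisj2 c hc d hd hcd w hwc (by rw [h]; exact hfmem d hd)
            exact hSAC w hwS (f d) hfdS hwfd (hwfc.trans hsub)
          have haAstar : a ∉ Astar := fun h => haF' (hAstar_sub h)
          -- a must be above one of the maxima
          have hexc : ∃ c ∈ l, f c ⊆ a := by
            by_contra hcon
            push_neg at hcon
            apply hno
            refine ⟨insert a Astar, ?_, ?_, ?_⟩
            · intro x hx
              rcases Finset.mem_insert.mp hx with rfl | hx
              · exact haF
              · exact hF'sub (hAstar_sub hx)
            · rw [Finset.card_insert_of_notMem haAstar, hAstar_card]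
            · intro x hx y hy hxy hsub
              rcases Finset.mem_insert.mp hx with hxa | hx2
              · rcases Finset.mem_insert.mp hy with hya | hy2
                · exact hxy (hxa.trans hya.symm)
                · rw [hxa] at hsub hxy
                  exact hxy ((hamax' y (hF'sub (hAstar_sub hy2)) hsub).symm)
              · rcases Finset.mem_insert.mp hy with hya | hy2
                · rw [hya] at hsub
                  obtain ⟨c, hc, hfc⟩ := (hAstar_mem x).mp hx2
                  rw [← hfc] at hsub
                  exact hcon c hc hsub
                · exact hAstar_AC x hx2 y hy2 hxy hsub
          obtain ⟨c₀, hc₀l, hfc₀a⟩ := hexc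
          set K : Finset (Finset ℕ) := insert a (c₀.filter (fun x => x ⊆ f c₀)) with hK
          have hKmem : ∀ x, x ∈ K ↔ (x = a ∨ (x ∈ c₀ ∧ x ⊆ f c₀)) := by
            intro x
            rw [hK, Finset.mem_insert, Finset.mem_filter]
          have hKchain : ∀ x ∈ K, ∀ y ∈ K, x ⊆ y ∨ y ⊆ x := by
            intro x hx y hy
            rcases (hKmem x).mp hx with hxa | hx2
            · rcases (hKmem y).mp hy with hya | hy2
              · rw [hxa, hya]; exact Or.inl (subset_refl _)
              · rw [hxa]; exact Or.inr (hy2.2.trans hfc₀a)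
            · rcases (hKmem y).mp hy with hya | hy2
              · rw [hya]; exact Or.inl (hx2.2.trans hfc₀a)
              · exact (hprops c₀ hc₀l).1 x hx2.1 y hy2.1
          have hKsub : K ⊆ F := by
            intro x hx
            rcases (hKmem x).mp hx with hxa | hx2
            · rw [hxa]; exact haF
            · exact hF'sub ((hprops c₀ hc₀l).2 hx2.1)
          have haK : a ∈ K := Finset.mem_insert_self _ _
          set F'' : Finset (Finset ℕ) := F \ K with hF''
          have hF''card : F''.card ≤ N := by
            have hsub2 : F'' ⊆ F' := by
              intro x hx
              rw [Finset.mem_sdiff] at hx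
              exact Finset.mem_erase.mpr ⟨fun h => hx.2 (h ▸ haK), hx.1⟩
            have := Finset.card_le_card hsub2
            omega
          have hno'' : ¬ ContainsAntichain (k+1) F'' := by
            rintro ⟨S, hSsub, hScard, hSAC⟩
            have hSF' : S ⊆ F' := by
              intro x hx
              have h2 := Finset.mem_sdiff.mp (hSsub hx)
              refine Finset.mem_erase.mpr ⟨fun h => h2.2 (h ▸ haK), h2.1⟩
            obtain ⟨w, hwS, hwc₀⟩ := hmeet S hSF' hScard hSAC c₀ hc₀l
            have hwK : w ∈ K := by
              refine (hKmem w).mpr (Or.inr ⟨hwc₀, ?_⟩)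
              exact hfmax c₀ hc₀l w (Finset.mem_filter.mpr ⟨hwc₀, ⟨S, hSF', hScard, hSAC, hwS⟩⟩)
            exact (Finset.mem_sdiff.mp (hSsub hwS)).2 hwK
          obtain ⟨l'', hlen'', hprops'', hcov'', hdisj''⟩ := ih F'' k hF''card hno''
          refine ⟨K :: l'', by simp [hlen''], ?_, ?_, ?_⟩
          · intro c hc
            rcases List.mem_cons.mp hc with rfl | hc
            · exact ⟨hKchain, hKsub⟩
            · exact ⟨(hprops'' c hc).1, ((hprops'' c hc).2).trans (Finset.sdiff_subset)⟩
          · intro x hx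
            by_cases hxK : x ∈ K
            · exact ⟨K, List.mem_cons_self, hxK⟩
            · obtain ⟨c, hc, hxc⟩ := hcov'' x (Finset.mem_sdiff.mpr ⟨hx, hxK⟩)
              exact ⟨c, List.mem_cons_of_mem _ hc, hxc⟩
          · rw [List.pairwise_cons]
            refine ⟨?_, hdisj''⟩
            intro c hc x hxK hxc
            exact (Finset.mem_sdiff.mp ((hprops'' c hc).2 hxc)).2 hxK
        · -- F' has no (k+1)-antichain
          have hno2 : ¬ ContainsAntichain (k+1) F' := by
            rintro ⟨S, hS, hc, hA⟩
            exact hex ⟨S, hS, hc, hA⟩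
          obtain ⟨l', hlen', hprops', hcov', hdisj'⟩ := ih F' k hF'card hno2
          refine ⟨{a} :: l', by simp [hlen'], ?_, ?_, ?_⟩
          · intro c hc
            rcases List.mem_cons.mp hc with rfl | hc
            · constructor
              · intro x hx y hy
                simp only [Finset.mem_singleton] at hx hy
                subst hx; subst hy; exact Or.inl (subset_refl _)
              · intro x hx
                simp only [Finset.mem_singleton] at hx
                subst hx; exact haF
            · exact ⟨(hprops' c hc).1, ((hprops' c hc).2).trans hF'sub⟩
          · intro x hx
            by_cases hxa : x = a
            · subst hxa; exact ⟨{x}, List.mem_cons_self, Finset.mem_singleton_self x⟩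
            · obtain ⟨c, hc, hxc⟩ := hcov' x (Finset.mem_erase.mpr ⟨hxa, hx⟩)
              exact ⟨c, List.mem_cons_of_mem _ hc, hxc⟩
          · rw [List.pairwise_cons]
            refine ⟨?_, hdisj'⟩
            intro c hc x hxa hxc
            simp only [Finset.mem_singleton] at hxa
            subst hxa
            exact haF' ((hprops' c hc).2 hxc)

private lemma interval_two (A B : Finset ℕ) (i : ℕ) (L U : Finset ℕ) (hLU : L ⊆ U)
    (hL : L.card < i) (hU : i < U.card)
    (hAB : ∀ X : Finset ℕ, L ⊆ X → X ⊆ U → X.card = i → X = A ∨ X = B) :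
    A ∩ B = L ∧ A ∪ B = U ∧ i = L.card + 1 ∧ U.card = L.card + 2 := by
  classical
  set D := U \ L with hD
  have hDcard : D.card = U.card - L.card := Finset.card_sdiff_of_subset hLU
  set r := i - L.card with hr
  have hr1 : 1 ≤ r := by omega
  have hrD : r < D.card := by omega
  have hLD : ∀ T ∈ D.powersetCard r, Disjoint L T := by
    intro T hT
    have hTD : T ⊆ D := (Finset.mem_powersetCard.mp hT).1
    rw [Finset.disjoint_left]
    intro x hxL hxT
    exact (Finset.mem_sdiff.mp (hTD hxT)).2 hxL
  have himg : ∀ T ∈ D.powersetCard r, L ∪ T = A ∨ L ∪ T = B := by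
    intro T hT
    obtain ⟨hTD, hTcard⟩ := Finset.mem_powersetCard.mp hT
    refine hAB (L ∪ T) (Finset.subset_union_left) ?_ ?_
    · apply Finset.union_subset hLU (hTD.trans (Finset.sdiff_subset))
    · rw [Finset.card_union_of_disjoint (hLD T hT), hTcard]
      omega
  have hinj : Set.InjOn (fun T => L ∪ T) (D.powersetCard r) := by
    intro T1 h1 T2 h2 heq
    simp only at heq
    have e1 : (L ∪ T1) \ L = T1 := by
      rw [Finset.union_sdiff_left, Finset.sdiff_eq_self_iff_disjoint]
      exact (hLD T1 h1).symm
    have e2 : (L ∪ T2) \ L = T2 := by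
      rw [Finset.union_sdiff_left, Finset.sdiff_eq_self_iff_disjoint]
      exact (hLD T2 h2).symm
    rw [← e1, ← e2, heq]
  have hcard2 : (D.powersetCard r).card ≤ 2 := by
    have h1 : (D.powersetCard r).card ≤ ({A, B} : Finset (Finset ℕ)).card := by
      apply Finset.card_le_card_of_injOn (fun T => L ∪ T) ?_ hinj
      intro T hT
      rcases himg T hT with h | h <;> simp [h]
    have h2 : ({A, B} : Finset (Finset ℕ)).card ≤ 2 :=
      (Finset.card_insert_le _ _).trans (by simp)
    omega
  rw [Finset.card_powersetCard] at hcard2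
  have hble := binom_lb D.card r hr1 hrD
  have hD2 : D.card = 2 := by omega
  have hrone : r = 1 := by omega
  obtain ⟨x, y, hxy, hDxy⟩ := Finset.card_eq_two.mp hD2
  have hxD : x ∈ D := by rw [hDxy]; simp
  have hyD : y ∈ D := by rw [hDxy]; simp
  have hxL : x ∉ L := (Finset.mem_sdiff.mp hxD).2
  have hyL : y ∉ L := (Finset.mem_sdiff.mp hyD).2
  have hX1 : L ∪ {x} = A ∨ L ∪ {x} = B := by
    apply himg
    rw [Finset.mem_powersetCard]
    exact ⟨by simp [hxD], by simp [hrone]⟩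
  have hX2 : L ∪ {y} = A ∨ L ∪ {y} = B := by
    apply himg
    rw [Finset.mem_powersetCard]
    exact ⟨by simp [hyD], by simp [hrone]⟩
  have hne : L ∪ {x} ≠ L ∪ {y} := by
    intro h
    have : x ∈ L ∪ {y} := by rw [← h]; simp
    rcases Finset.mem_union.mp this with h' | h'
    · exact hxL h'
    · exact hxy (Finset.mem_singleton.mp h')
  have hinter : (L ∪ {x}) ∩ (L ∪ {y}) = L := by
    ext a
    simp only [Finset.mem_inter, Finset.mem_union, Finset.mem_singleton]
    constructor
    · rintro ⟨h1 | h1, h2 | h2⟩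
      · exact h1
      · exact h1
      · exact h2
      · exact absurd (h1.symm.trans h2) hxy
    · intro h; exact ⟨Or.inl h, Or.inl h⟩
  have hunion : (L ∪ {x}) ∪ (L ∪ {y}) = U := by
    have h1 : (L ∪ {x}) ∪ (L ∪ {y}) = L ∪ {x, y} := by
      ext a
      simp only [Finset.mem_union, Finset.mem_singleton, Finset.mem_insert]
      tauto
    rw [h1, ← hDxy, hD]
    exact Finset.union_sdiff_of_subset hLU
  have hmain : A ∩ B = L ∧ A ∪ B = U := by
    rcases hX1 with h1 | h1 <;> rcases hX2 with h2 | h2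
    · exact absurd (h1.trans h2.symm) hne
    · rw [← h1, ← h2]; exact ⟨hinter, hunion⟩
    · rw [← h1, ← h2]
      rw [Finset.inter_comm (L ∪ {y}) (L ∪ {x}), Finset.union_comm (L ∪ {y}) (L ∪ {x})]
      exact ⟨hinter, hunion⟩
    · exact absurd (h1.trans h2.symm) hne
  exact ⟨hmain.1, hmain.2, by omega, by omega⟩

private lemma free_chain (n i : ℕ) (A B : Finset ℕ) (ch : Finset (Finset ℕ))
    (hi1 : 1 ≤ i) (hin : i < n)
    (hchain : ∀ x ∈ ch, ∀ y ∈ ch, x ⊆ y ∨ y ⊆ x)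
    (hIcc : ∀ x ∈ ch, x ⊆ Finset.Icc 1 n)
    (hne : ch.Nonempty)
    (hfree : ∀ x ∈ ch, x.card ≠ i)
    (htrap : ∀ X : Finset ℕ, X ⊆ Finset.Icc 1 n → X.card = i →
      (∀ c ∈ ch, c ⊆ X ∨ X ⊆ c) → X = A ∨ X = B) :
    (A ∩ B ∈ ch ∧ A ∪ B ∈ ch) ∨ (A ∪ B ∈ ch ∧ i = 1) ∨ (A ∩ B ∈ ch ∧ i + 1 = n) := by
  classical
  have hIccCard : (Finset.Icc 1 n).card = n := by simp
  set Lo := ch.filter (fun c => c.card < i) with hLo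
  set Hi := ch.filter (fun c => i < c.card) with hHi
  have hsplit : ∀ x ∈ ch, x ∈ Lo ∨ x ∈ Hi := by
    intro x hx
    have := hfree x hx
    rcases Nat.lt_or_ge x.card i with h | h
    · exact Or.inl (Finset.mem_filter.mpr ⟨hx, h⟩)
    · exact Or.inr (Finset.mem_filter.mpr ⟨hx, by omega⟩)
  by_cases hLoNe : Lo.Nonempty
  · obtain ⟨cm, hcmLo, hcmMax⟩ := Finset.exists_max_image Lo (fun x => x.card) hLoNe
    have hcmch : cm ∈ ch := (Finset.mem_filter.mp hcmLo).1
    have hcmcard : cm.card < i := (Finset.mem_filter.mp hcmLo).2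
    have hcmTop : ∀ c ∈ Lo, c ⊆ cm := by
      intro c hc
      rcases hchain c (Finset.mem_filter.mp hc).1 cm hcmch with h | h
      · exact h
      · rw [Finset.eq_of_subset_of_card_le h (hcmMax c hc)]
    by_cases hHiNe : Hi.Nonempty
    · obtain ⟨cp, hcpHi, hcpMin⟩ := Finset.exists_min_image Hi (fun x => x.card) hHiNe
      have hcpch : cp ∈ ch := (Finset.mem_filter.mp hcpHi).1
      have hcpcard : i < cp.card := (Finset.mem_filter.mp hcpHi).2
      have hcpBot : ∀ c ∈ Hi, cp ⊆ c := by
        intro c hc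
        rcases hchain cp hcpch c (Finset.mem_filter.mp hc).1 with h | h
        · exact h
        · rw [Finset.eq_of_subset_of_card_le h (hcpMin c hc)]
      have hsub : cm ⊆ cp := by
        rcases hchain cm hcmch cp hcpch with h | h
        · exact h
        · have := Finset.card_le_card h
          omega
      obtain ⟨hABi, hABu, _, _⟩ := interval_two A B i cm cp hsub hcmcard hcpcard (by
        intro X hX1 hX2 hX3
        refine htrap X (hX2.trans (hIcc cp hcpch)) hX3 ?_
        intro c hc
        rcases hsplit c hc with h | h
        · exact Or.inl ((hcmTop c h).trans hX1)
        · exact Or.inr (hX2.trans (hcpBot c h)))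
      exact Or.inl ⟨hABi ▸ hcmch, hABu ▸ hcpch⟩
    · obtain ⟨hABi, hABu, hie, hcardU⟩ := interval_two A B i cm (Finset.Icc 1 n)
        (hIcc cm hcmch) hcmcard (by omega) (by
          intro X hX1 hX2 hX3
          refine htrap X hX2 hX3 ?_
          intro c hc
          rcases hsplit c hc with h | h
          · exact Or.inl ((hcmTop c h).trans hX1)
          · exact absurd ⟨c, h⟩ hHiNe)
      refine Or.inr (Or.inr ⟨hABi ▸ hcmch, ?_⟩)
      rw [hIccCard] at hcardU
      omega
  · by_cases hHiNe : Hi.Nonempty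
    · obtain ⟨cp, hcpHi, hcpMin⟩ := Finset.exists_min_image Hi (fun x => x.card) hHiNe
      have hcpch : cp ∈ ch := (Finset.mem_filter.mp hcpHi).1
      have hcpcard : i < cp.card := (Finset.mem_filter.mp hcpHi).2
      have hcpBot : ∀ c ∈ Hi, cp ⊆ c := by
        intro c hc
        rcases hchain cp hcpch c (Finset.mem_filter.mp hc).1 with h | h
        · exact h
        · rw [Finset.eq_of_subset_of_card_le h (hcpMin c hc)]
      obtain ⟨hABi, hABu, hie, hcardU⟩ := interval_two A B i ∅ cp (Finset.empty_subset _)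
        (by simp only [Finset.card_empty]; omega) hcpcard (by
          intro X _ hX2 hX3
          refine htrap X (hX2.trans (hIcc cp hcpch)) hX3 ?_
          intro c hc
          rcases hsplit c hc with h | h
          · exact absurd ⟨c, h⟩ hLoNe
          · exact Or.inr (hX2.trans (hcpBot c h)))
      refine Or.inr (Or.inl ⟨hABu ▸ hcpch, ?_⟩)
      simpa using hie
    · obtain ⟨x, hx⟩ := hne
      rcases hsplit x hx with h | h
      · exact absurd ⟨x, h⟩ hLoNe
      · exact absurd ⟨x, h⟩ hHiNe

private lemma combine_free (n i : ℕ) (A B : Finset ℕ) (ch1 ch2 : Finset (Finset ℕ))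
    (hn : 5 ≤ n) (hdisj : ∀ x ∈ ch1, x ∉ ch2)
    (h1 : (A ∩ B ∈ ch1 ∧ A ∪ B ∈ ch1) ∨ (A ∪ B ∈ ch1 ∧ i = 1) ∨ (A ∩ B ∈ ch1 ∧ i + 1 = n))
    (h2 : (A ∩ B ∈ ch2 ∧ A ∪ B ∈ ch2) ∨ (A ∪ B ∈ ch2 ∧ i = 1) ∨ (A ∩ B ∈ ch2 ∧ i + 1 = n)) :
    False := by
  rcases h1 with ⟨hi1, hu1⟩ | ⟨hu1, he1⟩ | ⟨hi1, he1⟩ <;>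
    rcases h2 with ⟨hi2, hu2⟩ | ⟨hu2, he2⟩ | ⟨hi2, he2⟩
  · exact hdisj _ hi1 hi2
  · exact hdisj _ hu1 hu2
  · exact hdisj _ hi1 hi2
  · exact hdisj _ hu1 hu2
  · exact hdisj _ hu1 hu2
  · omega
  · exact hdisj _ hi1 hi2
  · omega
  · exact hdisj _ hi1 hi2


/-- For `n ≥ 5` and `F` a 5-antichain saturated family of subsets of `[n]`, no level
`1 ≤ i ≤ n - 1` of `F` has exactly two sets. -/
theorem five_saturated_no_level_two (n : ℕ) (hn : 5 ≤ n) (F : Finset (Finset ℕ))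
    (hF : IsAntichainSaturated n 5 F) :
    ¬ ∃ i, 1 ≤ i ∧ i ≤ n - 1 ∧ (F.filter fun A => A.card = i).card = 2 := by
  classical
  rintro ⟨i, hi1, hin, hcard⟩
  obtain ⟨hsub, hfree5, hsat⟩ := hF
  have hiltn : i < n := by omega
  obtain ⟨A, B, hABne, hABset⟩ := Finset.card_eq_two.mp hcard
  have hAF : A ∈ F ∧ A.card = i := by
    have h : A ∈ F.filter (fun A => A.card = i) := by rw [hABset]; simp
    exact Finset.mem_filter.mp h
  have hBF : B ∈ F ∧ B.card = i := by
    have h : B ∈ F.filter (fun A => A.card = i) := by rw [hABset]; simp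
    exact Finset.mem_filter.mp h
  have hclass : ∀ x ∈ F, x.card = i → x = A ∨ x = B := by
    intro x hx hxc
    have h : x ∈ F.filter (fun A => A.card = i) := Finset.mem_filter.mpr ⟨hx, hxc⟩
    rw [hABset] at h
    simpa using h
  have getAC : ∀ X : Finset ℕ, X ⊆ Finset.Icc 1 n → X ∉ F →
      ∃ C : Finset (Finset ℕ), C ⊆ F ∧ C.card = 4 ∧
        (∀ x ∈ C, ∀ y ∈ C, x ≠ y → ¬ x ⊆ y) ∧ (∀ x ∈ C, ¬ x ⊆ X ∧ ¬ X ⊆ x) := by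
    intro X hXI hXF
    obtain ⟨S, hSsub, hScard, hSAC⟩ := hsat X hXI hXF
    have hXS : X ∈ S := by
      by_contra hXS
      apply hfree5
      refine ⟨S, ?_, hScard, hSAC⟩
      intro y hy
      rcases Finset.mem_insert.mp (hSsub hy) with h | h
      · exact absurd (h ▸ hy) hXS
      · exact h
    refine ⟨S.erase X, ?_, ?_, ?_, ?_⟩
    · intro y hy
      have h1 := Finset.mem_erase.mp hy
      rcases Finset.mem_insert.mp (hSsub h1.2) with h | h
      · exact absurd h h1.1
      · exact h
    · rw [Finset.card_erase_of_mem hXS, hScard]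
    · intro x hx y hy hxy
      exact hSAC x (Finset.mem_erase.mp hx).2 y (Finset.mem_erase.mp hy).2 hxy
    · intro x hx
      have h1 := Finset.mem_erase.mp hx
      exact ⟨hSAC x h1.2 X hXS h1.1, hSAC X hXS x h1.2 (Ne.symm h1.1)⟩
  have hIccCard : (Finset.Icc 1 n).card = n := by simp
  have hX0 : ∃ X : Finset ℕ, X ⊆ Finset.Icc 1 n ∧ X.card = i ∧ X ∉ F := by
    by_contra hcon
    push_neg at hcon
    have h2 := interval_two A B i ∅ (Finset.Icc 1 n) (Finset.empty_subset _)
      (by simp only [Finset.card_empty]; omega) (by omega) (by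
        intro X _ hX2 hX3
        exact hclass X (hcon X hX2 hX3) hX3)
    rw [hIccCard] at h2
    simp only [Finset.card_empty] at h2
    omega
  obtain ⟨X₀, hX₀I, hX₀c, hX₀F⟩ := hX0
  obtain ⟨C₀, hC₀sub, hC₀card, hC₀AC, hC₀inc⟩ := getAC X₀ hX₀I hX₀F
  obtain ⟨l, hlen, hprops, hcov, hpair⟩ := dilworth F.card F 4 le_rfl hfree5
  have hmeets : ∀ c ∈ l, ∃ x ∈ C₀, x ∈ c :=
    meets_all l (fun c hc => (hprops c hc).1) C₀ hC₀AC
      (fun x hx => hcov x (hC₀sub hx)) (by rw [hlen, hC₀card])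
  have hchne : ∀ c ∈ l, c.Nonempty := by
    intro c hc
    obtain ⟨x, _, hxc⟩ := hmeets c hc
    exact ⟨x, hxc⟩
  have hdisj2 : ∀ c ∈ l, ∀ d ∈ l, c ≠ d → ∀ x ∈ c, x ∉ d := by
    apply pairwise_value _ (fun c d h x hxd hxc => h x hxc hxd) l hpair
    intro c hc hcon
    obtain ⟨x, hx⟩ := hchne c hc
    exact hcon x hx hx
  have htrap : ∀ c ∈ l, ∀ X : Finset ℕ, X ⊆ Finset.Icc 1 n → X.card = i →
      (∀ y ∈ c, y ⊆ X ∨ X ⊆ y) → X = A ∨ X = B := by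
    intro c hc X hXI hXc hcomp
    by_cases hXF : X ∈ F
    · exact hclass X hXF hXc
    · exfalso
      obtain ⟨C, hCsub, hCcard, hCAC, hCinc⟩ := getAC X hXI hXF
      obtain ⟨x, hxC, hxc⟩ := meets_all l (fun c hc => (hprops c hc).1) C hCAC
        (fun y hy => hcov y (hCsub hy)) (by rw [hlen, hCcard]) c hc
      rcases hcomp x hxc with h | h
      · exact (hCinc x hxC).1 h
      · exact (hCinc x hxC).2 h
  have mkfree : ∀ c ∈ l, (∀ x ∈ c, x.card ≠ i) →
      (A ∩ B ∈ c ∧ A ∪ B ∈ c) ∨ (A ∪ B ∈ c ∧ i = 1) ∨ (A ∩ B ∈ c ∧ i + 1 = n) := by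
    intro c hc hfr
    exact free_chain n i A B c hi1 hiltn (hprops c hc).1
      (fun x hx => hsub x ((hprops c hc).2 hx)) (hchne c hc) hfr (htrap c hc)
  have freeOf : ∀ c ∈ l, A ∉ c → B ∉ c → ∀ x ∈ c, x.card ≠ i := by
    intro c hc hA hB x hx hxc
    rcases hclass x ((hprops c hc).2 hx) hxc with h | h
    · exact hA (h ▸ hx)
    · exact hB (h ▸ hx)
  obtain ⟨cA, hcAl, hAcA⟩ := hcov A hAF.1
  obtain ⟨cB, hcBl, hBcB⟩ := hcov B hBF.1
  have hcAB : cA ≠ cB := by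
    rintro rfl
    rcases (hprops cA hcAl).1 A hAcA B hBcB with h | h
    · exact hABne (Finset.eq_of_subset_of_card_le h (by rw [hAF.2, hBF.2]))
    · exact hABne (Finset.eq_of_subset_of_card_le h (by rw [hAF.2, hBF.2])).symm
  have hnd : l.Nodup := by
    apply List.Pairwise.imp_of_mem ?_ hpair
    intro c d hc _ hR heq
    subst heq
    obtain ⟨x, hx⟩ := hchne c hc
    exact hR x hx hx
  have hTcard : 2 ≤ (l.toFinset \ {cA, cB}).card := by
    have h1 : l.toFinset.card = 4 := by rw [List.toFinset_card_of_nodup hnd, hlen]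
    have h2 : ({cA, cB} : Finset (Finset (Finset ℕ))).card ≤ 2 :=
      (Finset.card_insert_le _ _).trans (by simp)
    have h3 := Finset.le_card_sdiff ({cA, cB} : Finset (Finset (Finset ℕ))) l.toFinset
    omega
  have hTcard' : 1 < (l.toFinset \ {cA, cB}).card := by omega
  obtain ⟨c1, hc1T, c2, hc2T, hc12⟩ := Finset.one_lt_card.mp hTcard'
  have hc1 : c1 ∈ l ∧ c1 ≠ cA ∧ c1 ≠ cB := by
    have h := Finset.mem_sdiff.mp hc1T
    simp only [Finset.mem_insert, Finset.mem_singleton] at h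
    exact ⟨List.mem_toFinset.mp h.1, fun he => h.2 (Or.inl he), fun he => h.2 (Or.inr he)⟩
  have hc2 : c2 ∈ l ∧ c2 ≠ cA ∧ c2 ≠ cB := by
    have h := Finset.mem_sdiff.mp hc2T
    simp only [Finset.mem_insert, Finset.mem_singleton] at h
    exact ⟨List.mem_toFinset.mp h.1, fun he => h.2 (Or.inl he), fun he => h.2 (Or.inr he)⟩
  have hfree1 : ∀ x ∈ c1, x.card ≠ i :=
    freeOf c1 hc1.1 (fun h => hdisj2 c1 hc1.1 cA hcAl hc1.2.1 A h hAcA)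
      (fun h => hdisj2 c1 hc1.1 cB hcBl hc1.2.2 B h hBcB)
  have hfree2 : ∀ x ∈ c2, x.card ≠ i :=
    freeOf c2 hc2.1 (fun h => hdisj2 c2 hc2.1 cA hcAl hc2.2.1 A h hAcA)
      (fun h => hdisj2 c2 hc2.1 cB hcBl hc2.2.2 B h hBcB)
  exact combine_free n i A B c1 c2 hn (hdisj2 c1 hc1.1 c2 hc2.1 hc12)
    (mkfree c1 hc1.1 hfree1) (mkfree c2 hc2.1 hfree2)
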